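/- Suppose g : ℝ → ι → ℝ (with ι finite) satisfies the coupled mode ODEs (g_u)'(t) = -λ_u(t) g_u(t) - ∑_{v ≠ u} g_v(t) Ω(t)(v,u), where Ω(t) is antisymmetric for each t. Let S be a subset of ι and E_S(t) := ½ ∑_{u ∈ S} g_u(t)². Then E_S'(t) = -∑_{u ∈ S} λ_u(t) g_u(t)² - ∑_{u ∈ S} ∑_{v ∉ S} g_u(t) g_v(t) Ω(t)(v,u). -/

import Mathlib

theorem stmt_6 {ι : Type*} [Fintype ι] [DecidableEq ι]
    (lam : ℝ → ι → ℝ) (Ω : ℝ → ι → ι → ℝ)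
    (hΩ : ∀ t u v, Ω t v u = -Ω t u v)
    (g : ℝ → ι → ℝ)
    (hode : ∀ t u, HasDerivAt (fun s => g s u)
      (-(lam t u) * g t u - ∑ v ∈ Finset.univ.erase u, g t v * Ω t v u) t)
    (S : Finset ι) :
    ∀ t, HasDerivAt (fun s => (1 / 2 : ℝ) * ∑ u ∈ S, (g s u) ^ 2)
      (-∑ u ∈ S, lam t u * (g t u) ^ 2
        - ∑ u ∈ S, ∑ v ∈ Sᶜ, g t u * g t v * Ω t v u) t := by
  intro t
  have hΩ0 : ∀ u, Ω t u u = 0 := fun u => by have := hΩ t u u; linarith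
  have hD : HasDerivAt (fun s => (1 / 2 : ℝ) * ∑ u ∈ S, (g s u) ^ 2)
      ((1 / 2 : ℝ) * ∑ u ∈ S, 2 * g t u ^ 1 *
        (-(lam t u) * g t u - ∑ v ∈ Finset.univ.erase u, g t v * Ω t v u)) t := by
    apply HasDerivAt.const_mul
    exact HasDerivAt.fun_sum (fun u _ => by simpa using (hode t u).fun_pow 2)
  convert hD using 1
  have herase : ∀ u, (∑ v ∈ Finset.univ.erase u, g t v * Ω t v u)
      = (∑ v ∈ S, g t v * Ω t v u) + ∑ v ∈ Sᶜ, g t v * Ω t v u := by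
    intro u
    rw [Finset.sum_erase _ (by simp [hΩ0 u]), ← Finset.sum_add_sum_compl S]
  have hpt : ∀ u v, g t v * (g t u * Ω t u v) = -(g t u * (g t v * Ω t v u)) := by
    intro u v; rw [hΩ t u v]; ring
  have hzero : ∑ u ∈ S, g t u * ∑ v ∈ S, g t v * Ω t v u = 0 := by
    have h1 : ∑ u ∈ S, g t u * ∑ v ∈ S, g t v * Ω t v u
        = ∑ u ∈ S, ∑ v ∈ S, g t u * (g t v * Ω t v u) := by
      simp [Finset.mul_sum]
    have hswap : ∑ u ∈ S, ∑ v ∈ S, g t u * (g t v * Ω t v u)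
        = ∑ u ∈ S, ∑ v ∈ S, g t v * (g t u * Ω t u v) := Finset.sum_comm
    have hneg : ∑ u ∈ S, ∑ v ∈ S, g t v * (g t u * Ω t u v)
        = -∑ u ∈ S, ∑ v ∈ S, g t u * (g t v * Ω t v u) := by
      rw [← Finset.sum_neg_distrib]
      refine Finset.sum_congr rfl fun u _ => ?_
      rw [← Finset.sum_neg_distrib]
      exact Finset.sum_congr rfl fun v _ => hpt u v
    linarith [h1, hswap, hneg]
  simp only [herase, pow_one]
  rw [Finset.mul_sum]
  have expand : ∀ u ∈ S, (1 / 2 : ℝ) * (2 * g t u *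
      (-(lam t u) * g t u - ((∑ v ∈ S, g t v * Ω t v u) + ∑ v ∈ Sᶜ, g t v * Ω t v u)))
      = -(lam t u * g t u ^ 2) - g t u * (∑ v ∈ S, g t v * Ω t v u)
        - ∑ v ∈ Sᶜ, g t u * g t v * Ω t v u := by
    intro u _
    have hC : ∑ v ∈ Sᶜ, g t u * g t v * Ω t v u
        = g t u * ∑ v ∈ Sᶜ, g t v * Ω t v u := by
      rw [Finset.mul_sum]; simp [mul_assoc]
    rw [hC]; ring
  rw [Finset.sum_congr rfl expand]
  simp only [Finset.sum_sub_distrib]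
  rw [hzero]
  rw [Finset.sum_neg_distrib]
  ring
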